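/- Let (Y,σ) and (W,τ) be topological dynamical systems with homeomorphisms σ and τ, and consider the product system X = Y×W with commuting transformations S = σ×id and T = id×τ. Then R_{S,T}(X) equals the diagonal of X×X; that is, if ((y1,w1),(y2,w2)) ∈ R_S(X) ∩ R_T(X) then (y1,w1) = (y2,w2). -/

import Mathlib

/-- The `n`-th integer iterate of a homeomorphism, as a function. -/
def hpow {X : Type*} [TopologicalSpace X] (S : X ≃ₜ X) (n : ℤ) : X → X :=
  ⇑(S.toEquiv ^ n)

variable {X : Type*} [TopologicalSpace X]

def cube (S T : X ≃ₜ X) : Set (X × X × X × X) :=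
  closure {p | ∃ (x : X) (n m : ℤ),
    p = (x, hpow S n x, hpow T m x, hpow S n (hpow T m x))}

def cube2 (S : X ≃ₜ X) : Set (X × X) :=
  closure {p | ∃ (x : X) (n : ℤ), p = (x, hpow S n x)}

def relS (S T : X ≃ₜ X) : Set (X × X) :=
  {p | ∃ a : X, (p.1, p.2, a, a) ∈ cube S T}

def relT (S T : X ≃ₜ X) : Set (X × X) :=
  {p | ∃ b : X, (p.1, b, p.2, b) ∈ cube S T}

def minimalST (S T : X ≃ₜ X) : Prop :=
  ∀ x : X, Dense {y : X | ∃ n m : ℤ, y = hpow S n (hpow T m x)}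

def minimal1 (S : X ≃ₜ X) : Prop :=
  ∀ x : X, Dense {y : X | ∃ n : ℤ, y = hpow S n x}

def distalST {Y : Type*} [MetricSpace Y] (S T : Y ≃ₜ Y) : Prop :=
  ∀ x y : Y, x ≠ y → ∃ ε > 0, ∀ n m : ℤ,
    ε ≤ dist (hpow S n (hpow T m x)) (hpow S n (hpow T m y))

def proxT {Y : Type*} [MetricSpace Y] (T : Y ≃ₜ Y) : Set (Y × Y) :=
  {p | ∀ ε > 0, ∃ m : ℤ, dist (hpow T m p.1) (hpow T m p.2) < ε}

lemma hpow_prodL {Y W : Type*} [TopologicalSpace Y] [TopologicalSpace W]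
    (σ : Y ≃ₜ Y) (n : ℤ) :
    ∀ z : Y × W, hpow (σ.prodCongr (Homeomorph.refl W)) n z = (hpow σ n z.1, z.2) := by
  unfold hpow
  induction n using Int.induction_on with
  | zero => simp
  | succ k ih =>
      intro z
      rw [zpow_add_one, zpow_add_one]
      simp only [Equiv.Perm.mul_apply, ih]
      rfl
  | pred k ih =>
      intro z
      rw [zpow_sub_one, zpow_sub_one]
      simp only [Equiv.Perm.mul_apply, ih]
      rfl

lemma hpow_prodR {Y W : Type*} [TopologicalSpace Y] [TopologicalSpace W]
    (τ : W ≃ₜ W) (n : ℤ) :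
    ∀ z : Y × W, hpow ((Homeomorph.refl Y).prodCongr τ) n z = (z.1, hpow τ n z.2) := by
  unfold hpow
  induction n using Int.induction_on with
  | zero => simp
  | succ k ih =>
      intro z
      rw [zpow_add_one, zpow_add_one]
      simp only [Equiv.Perm.mul_apply, ih]
      rfl
  | pred k ih =>
      intro z
      rw [zpow_sub_one, zpow_sub_one]
      simp only [Equiv.Perm.mul_apply, ih]
      rfl

lemma cube_sub {Y W : Type*} [TopologicalSpace Y] [TopologicalSpace W]
    [T2Space Y] [T2Space W] (σ : Y ≃ₜ Y) (τ : W ≃ₜ W) :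
    cube (σ.prodCongr (Homeomorph.refl W)) ((Homeomorph.refl Y).prodCongr τ) ⊆
      {p : (Y × W) × (Y × W) × (Y × W) × (Y × W) |
        p.1.2 = p.2.1.2 ∧ p.1.1 = p.2.2.1.1 ∧ p.2.1.1 = p.2.2.2.1 ∧
        p.2.2.1.2 = p.2.2.2.2} := by
  apply closure_minimal
  · rintro p ⟨x, n, m, rfl⟩
    simp [hpow_prodL, hpow_prodR]
  · refine IsClosed.inter (isClosed_eq ?_ ?_) (IsClosed.inter (isClosed_eq ?_ ?_)
      (IsClosed.inter (isClosed_eq ?_ ?_) (isClosed_eq ?_ ?_))) <;> fun_prop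

theorem stmt4 {Y W : Type*} [MetricSpace Y] [CompactSpace Y]
    [MetricSpace W] [CompactSpace W] (σ : Y ≃ₜ Y) (τ : W ≃ₜ W) :
    relS (σ.prodCongr (Homeomorph.refl W)) ((Homeomorph.refl Y).prodCongr τ) ∩
      relT (σ.prodCongr (Homeomorph.refl W)) ((Homeomorph.refl Y).prodCongr τ)
      = Set.diagonal (Y × W) := by
  ext p
  constructor
  · rintro ⟨⟨a, ha⟩, -⟩
    obtain ⟨h1, h2, h3, -⟩ := cube_sub σ τ ha
    have : p.1.1 = p.2.1 := h2.trans h3.symm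
    exact Prod.ext this h1
  · intro hp
    have hd : p.1 = p.2 := hp
    constructor
    · exact ⟨p.1, subset_closure ⟨p.1, 0, 0, by simp [hpow, hd, Prod.ext_iff]⟩⟩
    · exact ⟨p.1, subset_closure ⟨p.1, 0, 0, by simp [hpow, hd, Prod.ext_iff]⟩⟩
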